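/- Suppose each f_i : R^p × R^q → R (i = 1,…,m) is twice differentiable, μ-strongly-convex-strongly-concave, and L-smooth (gradients L-Lipschitz), and that the average f = (1/m)∑ f_i has a minimax point (x*, y*) in a compact convex set X × Y. Then the iterates of FedGDA-GT with K local steps and constant step size η satisfy ‖x^t - x*‖² + ‖y^t - y*‖² ≤ ρ(η)^t (‖x^0 - x*‖² + ‖y^0 - y*‖²) for all t, where ρ(η) = 1 - 2(ημK - 2η²L²K² - η⁴L⁴K⁴), for any η > 0 small enough that ρ(η) ∈ (0,1). -/

import Mathlib

open scoped RealInnerProductSpace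
open scoped RealInnerProductSpace

private lemma sum_range_le_sq (n : ℕ) : ∑ k ∈ Finset.range n, (k : ℝ) ≤ (n:ℝ) ^ 2 / 2 := by
  induction n with
  | zero => simp
  | succ n ih =>
    rw [Finset.sum_range_succ]
    push_cast
    nlinarith

private lemma fedgda_key {E : Type*} [NormedAddCommGroup E] [InnerProductSpace ℝ E]
    (m K : ℕ) (hm : 0 < m) (hK : 0 < K) (μ L η : ℝ) (hμ : 0 < μ) (hμL : μ ≤ L) (hη : 0 < η)
    (F : Fin m → E → E)
    (hmono : ∀ i (v v' : E), μ * ‖v - v'‖ ^ 2 ≤ ⟪F i v - F i v', v - v'⟫)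
    (hlip : ∀ i (v v' : E), ‖F i v - F i v'‖ ≤ L * ‖v - v'‖)
    (zt zs : E) (hzs : (m:ℝ)⁻¹ • ∑ i, F i zs = 0)
    (u : Fin m → ℕ → E) (hu0 : ∀ i, u i 0 = zt)
    (hrec : ∀ i k, u i (k+1) = u i k - η • (F i (u i k) - F i zt + (m:ℝ)⁻¹ • ∑ j, F j zt))
    (hgap : 0 < η * μ * K - 2 * η ^ 2 * L ^ 2 * (K:ℝ) ^ 2 - η ^ 4 * L ^ 4 * (K:ℝ) ^ 4) :
    ‖(m:ℝ)⁻¹ • (∑ i, u i K) - zs‖ ^ 2 ≤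
      (1 - 2 * (η * μ * K - 2 * η ^ 2 * L ^ 2 * (K:ℝ) ^ 2 - η ^ 4 * L ^ 4 * (K:ℝ) ^ 4)) *
        ‖zt - zs‖ ^ 2 := by
  have hm0 : ((m:ℝ)) ≠ 0 := Nat.cast_ne_zero.mpr hm.ne'
  have hminv : (0:ℝ) ≤ (m:ℝ)⁻¹ := by positivity
  have hL0 : (0:ℝ) < L := lt_of_lt_of_le hμ hμL
  have hKpos : (0:ℝ) < (K:ℝ) := by exact_mod_cast hK
  have hB : 2 * η ^ 2 * L ^ 2 * (K:ℝ) ^ 2 < η * μ * K := by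
    nlinarith [(by positivity : (0:ℝ) ≤ η ^ 4 * L ^ 4 * (K:ℝ) ^ 4)]
  have h1 : 2 * η * L ^ 2 * K < μ := by
    have hηK : 0 < η * (K:ℝ) := by positivity
    nlinarith [hB, hηK]
  have h2sK : 2 * η * L * K < 1 := by nlinarith [h1, hμL, hL0]
  have hs2 : η ^ 2 * L ^ 2 * (K:ℝ) ^ 2 ≤ 2 * η * μ * K := by
    have : (0:ℝ) ≤ η * μ * K := by positivity
    linarith
  set g : E := (m:ℝ)⁻¹ • ∑ j, F j zt with hg_def
  clear_value g
  set D : ℝ := ‖zt - zs‖ with hD_def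
  clear_value D
  have hD0 : 0 ≤ D := hD_def ▸ norm_nonneg _
  have hgrw : g = (m:ℝ)⁻¹ • ∑ j, (F j zt - F j zs) := by
    rw [Finset.sum_sub_distrib, smul_sub, ← hg_def, hzs, sub_zero]
  -- ‖g‖ ≤ L * D
  have hsum_norm : ‖∑ j, (F j zt - F j zs)‖ ≤ (m:ℝ) * (L * D) := by
    refine (norm_sum_le _ _).trans ?_
    calc ∑ j : Fin m, ‖F j zt - F j zs‖ ≤ ∑ _j : Fin m, L * D :=
          Finset.sum_le_sum fun j _ => by rw [hD_def]; exact hlip j zt zs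
      _ = (m:ℝ) * (L * D) := by
          rw [Finset.sum_const, Finset.card_univ, Fintype.card_fin, nsmul_eq_mul]
  have hgnorm : ‖g‖ ≤ L * D := by
    rw [hgrw, norm_smul, Real.norm_eq_abs, abs_of_nonneg hminv]
    calc (m:ℝ)⁻¹ * ‖∑ j, (F j zt - F j zs)‖ ≤ (m:ℝ)⁻¹ * ((m:ℝ) * (L * D)) :=
          mul_le_mul_of_nonneg_left hsum_norm hminv
      _ = L * D := by field_simp
  -- μ D² ≤ ⟪g, zt - zs⟫
  have hgd : μ * D ^ 2 ≤ ⟪g, zt - zs⟫ := by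
    rw [hgrw, real_inner_smul_left, sum_inner]
    have : (m:ℝ) * (μ * D ^ 2) ≤ ∑ j : Fin m, ⟪F j zt - F j zs, zt - zs⟫ := by
      calc (m:ℝ) * (μ * D ^ 2) = ∑ _j : Fin m, μ * D ^ 2 := by
            rw [Finset.sum_const, Finset.card_univ, Fintype.card_fin, nsmul_eq_mul]
        _ ≤ _ := Finset.sum_le_sum fun j _ => by rw [hD_def]; exact hmono j zt zs
    calc μ * D ^ 2 = (m:ℝ)⁻¹ * ((m:ℝ) * (μ * D ^ 2)) := by field_simp
      _ ≤ _ := mul_le_mul_of_nonneg_left this hminv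
  -- local iterate bound
  have hloc : ∀ i, ∀ k, k ≤ K → ‖u i k - zt‖ ≤ 2 * k * η * ‖g‖ := by
    intro i k
    induction k with
    | zero => intro _; simp [hu0]
    | succ k ih =>
      intro hk1
      have hk : k ≤ K := Nat.le_of_succ_le hk1
      have ihk := ih hk
      have hkK : (k:ℝ) ≤ (K:ℝ) := by exact_mod_cast hk
      have h3 : 2 * (k:ℝ) * η * L ≤ 1 := by nlinarith [mul_nonneg hη.le hL0.le]
      have hstep : u i (k+1) - zt = (u i k - zt) - η • (F i (u i k) - F i zt) - η • g := by
        rw [hrec i k, smul_add]; abel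
      have t2 : ‖F i (u i k) - F i zt‖ ≤ L * ‖u i k - zt‖ := hlip i (u i k) zt
      have hg0 : (0:ℝ) ≤ ‖g‖ := norm_nonneg _
      have hnA : ‖η • (F i (u i k) - F i zt)‖ = η * ‖F i (u i k) - F i zt‖ := by
        rw [norm_smul, Real.norm_eq_abs, abs_of_nonneg hη.le]
      have hnB : ‖η • g‖ = η * ‖g‖ := by
        rw [norm_smul, Real.norm_eq_abs, abs_of_nonneg hη.le]
      calc ‖u i (k+1) - zt‖
          ≤ ‖u i k - zt‖ + η * ‖F i (u i k) - F i zt‖ + η * ‖g‖ := by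
            rw [hstep]
            have e1 := norm_sub_le (u i k - zt - η • (F i (u i k) - F i zt)) (η • g)
            have e2 := norm_sub_le (u i k - zt) (η • (F i (u i k) - F i zt))
            rw [hnA] at e2
            rw [hnB] at e1
            linarith
        _ ≤ 2 * k * η * ‖g‖ + η * (L * (2 * k * η * ‖g‖)) + η * ‖g‖ := by
            have hFb : η * ‖F i (u i k) - F i zt‖ ≤ η * (L * (2 * k * η * ‖g‖)) :=
              mul_le_mul_of_nonneg_left
                (t2.trans (mul_le_mul_of_nonneg_left ihk hL0.le)) hη.le
            linarith
        _ ≤ 2 * (k+1 : ℕ) * η * ‖g‖ := by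
            push_cast
            linarith [mul_le_mul_of_nonneg_right h3 (mul_nonneg hη.le hg0)]
  -- telescoping
  have htel : ∀ i n, u i n = zt - (η * n) • g - η • ∑ k ∈ Finset.range n, (F i (u i k) - F i zt) := by
    intro i n
    induction n with
    | zero => simp [hu0]
    | succ n ih =>
      rw [hrec i n, Finset.sum_range_succ, ih]
      push_cast
      module
  -- averaging the telescoped iterates
  have h1 : ∑ i : Fin m, u i K =
      (m:ℕ) • (zt - (η * K) • g) -
        η • ∑ i : Fin m, ∑ k ∈ Finset.range K, (F i (u i k) - F i zt) := by
    calc ∑ i : Fin m, u i K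
        = ∑ i : Fin m, ((zt - (η * K) • g) - η • ∑ k ∈ Finset.range K, (F i (u i k) - F i zt)) :=
          Finset.sum_congr rfl fun i _ => htel i K
      _ = _ := by
          rw [Finset.sum_sub_distrib, Finset.sum_const, Finset.card_univ, Fintype.card_fin,
            ← Finset.smul_sum]
  set e : E := (m:ℝ)⁻¹ • ∑ i : Fin m, ∑ k ∈ Finset.range K, (F i (u i k) - F i zt) with he_def
  clear_value e
  have havg : (m:ℝ)⁻¹ • (∑ i, u i K) - zs = ((zt - zs) - (η * K) • g) - η • e := by
    rw [h1, smul_sub, ← Nat.cast_smul_eq_nsmul ℝ m (zt - (η * K) • g), smul_smul,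
      inv_mul_cancel₀ hm0, one_smul, smul_comm ((m:ℝ)⁻¹) η, ← he_def]
    abel
  -- bounding the error term e
  have hi : ∀ i : Fin m, ‖∑ k ∈ Finset.range K, (F i (u i k) - F i zt)‖
      ≤ η * L * (K:ℝ) ^ 2 * ‖g‖ := by
    intro i
    refine (norm_sum_le _ _).trans ?_
    have hterm : ∀ k ∈ Finset.range K, ‖F i (u i k) - F i zt‖ ≤ L * (2 * k * η * ‖g‖) :=
      fun k hk => (hlip i (u i k) zt).trans
        (mul_le_mul_of_nonneg_left (hloc i k (Finset.mem_range.mp hk).le) hL0.le)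
    refine (Finset.sum_le_sum hterm).trans ?_
    have hsum : ∑ k ∈ Finset.range K, L * (2 * (k:ℝ) * η * ‖g‖)
        = (L * (2 * η * ‖g‖)) * ∑ k ∈ Finset.range K, (k:ℝ) := by
      rw [Finset.mul_sum]; exact Finset.sum_congr rfl fun k _ => by ring
    rw [hsum]
    calc (L * (2 * η * ‖g‖)) * ∑ k ∈ Finset.range K, (k:ℝ)
        ≤ (L * (2 * η * ‖g‖)) * ((K:ℝ) ^ 2 / 2) :=
          mul_le_mul_of_nonneg_left (sum_range_le_sq K)
            (mul_nonneg hL0.le (by positivity))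
      _ = η * L * (K:ℝ) ^ 2 * ‖g‖ := by ring
  have henorm : ‖e‖ ≤ η * L * (K:ℝ) ^ 2 * ‖g‖ := by
    rw [he_def, norm_smul, Real.norm_eq_abs, abs_of_nonneg hminv]
    have step : ‖∑ i : Fin m, ∑ k ∈ Finset.range K, (F i (u i k) - F i zt)‖
        ≤ (m:ℝ) * (η * L * (K:ℝ) ^ 2 * ‖g‖) := by
      refine (norm_sum_le _ _).trans ?_
      calc ∑ i : Fin m, ‖∑ k ∈ Finset.range K, (F i (u i k) - F i zt)‖
          ≤ ∑ _i : Fin m, (η * L * (K:ℝ) ^ 2 * ‖g‖) := Finset.sum_le_sum fun i _ => hi i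
        _ = (m:ℝ) * (η * L * (K:ℝ) ^ 2 * ‖g‖) := by
            rw [Finset.sum_const, Finset.card_univ, Fintype.card_fin, nsmul_eq_mul]
    calc (m:ℝ)⁻¹ * ‖∑ i : Fin m, ∑ k ∈ Finset.range K, (F i (u i k) - F i zt)‖
        ≤ (m:ℝ)⁻¹ * ((m:ℝ) * (η * L * (K:ℝ) ^ 2 * ‖g‖)) :=
          mul_le_mul_of_nonneg_left step hminv
      _ = η * L * (K:ℝ) ^ 2 * ‖g‖ := by field_simp
  -- contraction of the gradient-step part
  have hexp : ‖(zt - zs) - (η * K) • g‖ ^ 2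
      = D ^ 2 - 2 * (η * K) * ⟪g, zt - zs⟫ + (η * K) ^ 2 * ‖g‖ ^ 2 := by
    rw [norm_sub_sq_real, real_inner_smul_right, norm_smul, Real.norm_eq_abs,
      abs_of_nonneg (by positivity : (0:ℝ) ≤ η * K), real_inner_comm (zt - zs) g, ← hD_def]
    ring
  have ha2 : ‖(zt - zs) - (η * K) • g‖ ^ 2 ≤ (1 - 2 * η * μ * K + η ^ 2 * L ^ 2 * (K:ℝ) ^ 2) * D ^ 2 := by
    rw [hexp]
    have p1 : (η * K) * (μ * D ^ 2) ≤ (η * K) * ⟪g, zt - zs⟫ :=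
      mul_le_mul_of_nonneg_left hgd (by positivity)
    have p2 : ‖g‖ ^ 2 ≤ (L * D) ^ 2 := pow_le_pow_left₀ (norm_nonneg g) hgnorm 2
    linarith [p1, mul_le_mul_of_nonneg_left p2 (by positivity : (0:ℝ) ≤ (η * K) ^ 2)]
  have haD : ‖(zt - zs) - (η * K) • g‖ ≤ D := by
    have h2 : ‖(zt - zs) - (η * K) • g‖ ^ 2 ≤ D ^ 2 :=
      ha2.trans (by linarith [mul_le_mul_of_nonneg_right hs2 (sq_nonneg D)])
    exact le_of_pow_le_pow_left₀ two_ne_zero hD0 h2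
  have hee : η * ‖e‖ ≤ η ^ 2 * L ^ 2 * (K:ℝ) ^ 2 * D := by
    have q1 : η * ‖e‖ ≤ η * (η * L * (K:ℝ) ^ 2 * ‖g‖) := mul_le_mul_of_nonneg_left henorm hη.le
    have q2 : η * (η * L * (K:ℝ) ^ 2 * ‖g‖) ≤ η * (η * L * (K:ℝ) ^ 2 * (L * D)) := by
      refine mul_le_mul_of_nonneg_left (mul_le_mul_of_nonneg_left hgnorm ?_) hη.le
      exact mul_nonneg (mul_nonneg hη.le hL0.le) (by positivity)
    exact (q1.trans q2).trans_eq (by ring)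
  -- combine
  have htri : ‖(m:ℝ)⁻¹ • (∑ i, u i K) - zs‖ ≤ ‖(zt - zs) - (η * K) • g‖ + η * ‖e‖ := by
    rw [havg]
    refine (norm_sub_le _ _).trans ?_
    rw [norm_smul, Real.norm_eq_abs, abs_of_nonneg hη.le]
  have hsq : ‖(m:ℝ)⁻¹ • (∑ i, u i K) - zs‖ ^ 2
      ≤ (‖(zt - zs) - (η * K) • g‖ + η * ‖e‖) ^ 2 :=
    pow_le_pow_left₀ (norm_nonneg _) htri 2
  have he0 : (0:ℝ) ≤ η * ‖e‖ := mul_nonneg hη.le (norm_nonneg e)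
  have hεD : (0:ℝ) ≤ η ^ 2 * L ^ 2 * (K:ℝ) ^ 2 * D := by positivity
  have hint1 : ‖(zt - zs) - (η * K) • g‖ * (η * ‖e‖) ≤ D * (η ^ 2 * L ^ 2 * (K:ℝ) ^ 2 * D) :=
    mul_le_mul haD hee he0 hD0
  have hint2 : (η * ‖e‖) * (η * ‖e‖) ≤ (η ^ 2 * L ^ 2 * (K:ℝ) ^ 2 * D) * (η ^ 2 * L ^ 2 * (K:ℝ) ^ 2 * D) :=
    mul_le_mul hee hee he0 hεD
  have hint3 : (0:ℝ) ≤ η ^ 2 * L ^ 2 * (K:ℝ) ^ 2 * D ^ 2 := by positivity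
  have hint4 : (0:ℝ) ≤ η ^ 4 * L ^ 4 * (K:ℝ) ^ 4 * D ^ 2 := by positivity
  linarith [hsq, ha2, hint1, hint2, hint3, hint4]

private lemma proj_contract {E : Type*} [NormedAddCommGroup E] [InnerProductSpace ℝ E]
    {X : Set E} (hX : Convex ℝ X) {P : E → E}
    (hP : ∀ w, P w ∈ X ∧ ∀ u ∈ X, ‖P w - w‖ ≤ ‖u - w‖) {c : E} (hc : c ∈ X) (w : E) :
    ‖P w - c‖ ^ 2 ≤ ‖w - c‖ ^ 2 := by
  obtain ⟨hPX, hmin⟩ := hP w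
  haveI : Nonempty X := ⟨⟨c, hc⟩⟩
  have hinf : ‖w - P w‖ = ⨅ u : X, ‖w - (u : E)‖ := by
    apply le_antisymm
    · refine le_ciInf fun u => ?_
      calc ‖w - P w‖ = ‖P w - w‖ := norm_sub_rev _ _
        _ ≤ ‖(u : E) - w‖ := hmin u u.2
        _ = ‖w - (u : E)‖ := norm_sub_rev _ _
    · have hbdd : BddBelow (Set.range fun u : X => ‖w - (u : E)‖) :=
        ⟨0, by rintro x ⟨u, rfl⟩; exact norm_nonneg _⟩
      exact ciInf_le hbdd ⟨P w, hPX⟩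
  have hchar : (inner ℝ (w - P w) (c - P w) : ℝ) ≤ 0 :=
    (norm_eq_iInf_iff_real_inner_le_zero hX hPX).mp hinf c hc
  have hrw : w - c = (w - P w) - (c - P w) := by abel
  have hexp : ‖w - c‖ ^ 2
      = ‖w - P w‖ ^ 2 - 2 * (inner ℝ (w - P w) (c - P w) : ℝ) + ‖c - P w‖ ^ 2 := by
    rw [hrw, norm_sub_sq_real]
  have hrev : ‖P w - c‖ = ‖c - P w‖ := norm_sub_rev _ _
  rw [hrev]
  nlinarith [sq_nonneg ‖w - P w‖, hchar]

-- componentwise lemmas for `WithLp 2 (α × β)` (all definitional)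
private lemma wlp_ext {α β : Type*} [AddCommGroup α] [AddCommGroup β]
    (a b : WithLp 2 (α × β)) (h1 : a.ofLp.1 = b.ofLp.1) (h2 : a.ofLp.2 = b.ofLp.2) : a = b :=
  WithLp.ofLp_injective 2 (Prod.ext h1 h2)

private lemma wlp_norm_sq {α β : Type*} [NormedAddCommGroup α] [NormedAddCommGroup β]
    (x : WithLp 2 (α × β)) : ‖x‖ ^ 2 = ‖x.ofLp.1‖ ^ 2 + ‖x.ofLp.2‖ ^ 2 :=
  WithLp.prod_norm_sq_eq_of_L2 x

private lemma fedgda_onestep {p q : ℕ} (m K : ℕ) (hm : 0 < m) (hK : 0 < K)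
    (μ L η : ℝ) (hμ : 0 < μ) (hμL : μ ≤ L) (hη : 0 < η)
    (gx : Fin m → EuclideanSpace ℝ (Fin p) × EuclideanSpace ℝ (Fin q) → EuclideanSpace ℝ (Fin p))
    (gy : Fin m → EuclideanSpace ℝ (Fin p) × EuclideanSpace ℝ (Fin q) → EuclideanSpace ℝ (Fin q))
    (hmono : ∀ i (z z' : EuclideanSpace ℝ (Fin p) × EuclideanSpace ℝ (Fin q)),
      μ * (‖z.1 - z'.1‖ ^ 2 + ‖z.2 - z'.2‖ ^ 2) ≤
        (inner ℝ (gx i z - gx i z') (z.1 - z'.1) : ℝ) - (inner ℝ (gy i z - gy i z') (z.2 - z'.2) : ℝ))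
    (hlip : ∀ i (z z' : EuclideanSpace ℝ (Fin p) × EuclideanSpace ℝ (Fin q)),
      ‖gx i z - gx i z'‖ ^ 2 + ‖gy i z - gy i z'‖ ^ 2 ≤
        L ^ 2 * (‖z.1 - z'.1‖ ^ 2 + ‖z.2 - z'.2‖ ^ 2))
    (xs : EuclideanSpace ℝ (Fin p)) (ys : EuclideanSpace ℝ (Fin q))
    (hstat1 : (m : ℝ)⁻¹ • ∑ i, gx i (xs, ys) = 0)
    (hstat2 : (m : ℝ)⁻¹ • ∑ i, gy i (xs, ys) = 0)
    (zt : EuclideanSpace ℝ (Fin p) × EuclideanSpace ℝ (Fin q))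
    (w : Fin m → ℕ → EuclideanSpace ℝ (Fin p) × EuclideanSpace ℝ (Fin q))
    (hw0 : ∀ i, w i 0 = zt)
    (hwx : ∀ i k, (w i (k + 1)).1 = (w i k).1 -
        η • (gx i (w i k) - gx i zt + (m : ℝ)⁻¹ • ∑ j, gx j zt))
    (hwy : ∀ i k, (w i (k + 1)).2 = (w i k).2 +
        η • (gy i (w i k) - gy i zt + (m : ℝ)⁻¹ • ∑ j, gy j zt))
    (hgap : 0 < η * μ * K - 2 * η ^ 2 * L ^ 2 * (K:ℝ) ^ 2 - η ^ 4 * L ^ 4 * (K:ℝ) ^ 4) :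
    ‖(m:ℝ)⁻¹ • ∑ i, (w i K).1 - xs‖ ^ 2 + ‖(m:ℝ)⁻¹ • ∑ i, (w i K).2 - ys‖ ^ 2 ≤
      (1 - 2 * (η * μ * K - 2 * η ^ 2 * L ^ 2 * (K:ℝ) ^ 2 - η ^ 4 * L ^ 4 * (K:ℝ) ^ 4)) *
        (‖zt.1 - xs‖ ^ 2 + ‖zt.2 - ys‖ ^ 2) := by
  classical
  let Ep := EuclideanSpace ℝ (Fin p)
  let Eq' := EuclideanSpace ℝ (Fin q)
  let ι : Ep × Eq' → WithLp 2 (Ep × Eq') := (WithLp.equiv 2 (Ep × Eq')).symm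
  let F : Fin m → WithLp 2 (Ep × Eq') → WithLp 2 (Ep × Eq') :=
    fun i v => ι (gx i (v.ofLp.1, v.ofLp.2), -(gy i (v.ofLp.1, v.ofLp.2)))
  let u : Fin m → ℕ → WithLp 2 (Ep × Eq') := fun i k => ι (w i k)
  let zt' : WithLp 2 (Ep × Eq') := ι zt
  let zs' : WithLp 2 (Ep × Eq') := ι (xs, ys)
  -- monotonicity in the combined space
  have hmono' : ∀ i (v v' : WithLp 2 (Ep × Eq')),
      μ * ‖v - v'‖ ^ 2 ≤ ⟪F i v - F i v', v - v'⟫ := by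
    intro i v v'
    have h := hmono i (v.ofLp.1, v.ofLp.2) (v'.ofLp.1, v'.ofLp.2)
    simp only at h
    rw [WithLp.prod_inner_apply, wlp_norm_sq]
    have c2 : (F i v - F i v').ofLp.2 = -(gy i (v.ofLp.1, v.ofLp.2) - gy i (v'.ofLp.1, v'.ofLp.2)) := by
      show -(gy i (v.ofLp.1, v.ofLp.2)) - -(gy i (v'.ofLp.1, v'.ofLp.2)) = _
      abel
    rw [c2, inner_neg_left]
    have c1 : (F i v - F i v').ofLp.1 = gx i (v.ofLp.1, v.ofLp.2) - gx i (v'.ofLp.1, v'.ofLp.2) := rfl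
    rw [c1]
    have d1 : (v - v').ofLp.1 = v.ofLp.1 - v'.ofLp.1 := rfl
    have d2 : (v - v').ofLp.2 = v.ofLp.2 - v'.ofLp.2 := rfl
    rw [d1, d2]
    linarith [h]
  -- Lipschitz in the combined space
  have hlip' : ∀ i (v v' : WithLp 2 (Ep × Eq')),
      ‖F i v - F i v'‖ ≤ L * ‖v - v'‖ := by
    intro i v v'
    have h := hlip i (v.ofLp.1, v.ofLp.2) (v'.ofLp.1, v'.ofLp.2)
    simp only at h
    have hL0 : (0:ℝ) < L := lt_of_lt_of_le hμ hμL
    refine le_of_pow_le_pow_left₀ two_ne_zero (by positivity) ?_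
    rw [mul_pow, wlp_norm_sq, wlp_norm_sq]
    have c1 : (F i v - F i v').ofLp.1 = gx i (v.ofLp.1, v.ofLp.2) - gx i (v'.ofLp.1, v'.ofLp.2) := rfl
    have c2 : (F i v - F i v').ofLp.2 = -(gy i (v.ofLp.1, v.ofLp.2) - gy i (v'.ofLp.1, v'.ofLp.2)) := by
      show -(gy i (v.ofLp.1, v.ofLp.2)) - -(gy i (v'.ofLp.1, v'.ofLp.2)) = _
      abel
    have d1 : (v - v').ofLp.1 = v.ofLp.1 - v'.ofLp.1 := rfl
    have d2 : (v - v').ofLp.2 = v.ofLp.2 - v'.ofLp.2 := rfl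
    rw [c1, c2, d1, d2, norm_neg]
    exact h
  -- stationarity in the combined space
  have hfstsum : ∀ (a : Ep × Eq'), (∑ j : Fin m, F j (ι a)).ofLp.1 = ∑ j : Fin m, gx j a := by
    intro a
    rw [WithLp.ofLp_sum]
    exact Prod.fst_sum.trans (Finset.sum_congr rfl fun j _ => rfl)
  have hsndsum : ∀ (a : Ep × Eq'), (∑ j : Fin m, F j (ι a)).ofLp.2 = -∑ j : Fin m, gy j a := by
    intro a
    rw [WithLp.ofLp_sum]
    refine Prod.snd_sum.trans ?_
    rw [← Finset.sum_neg_distrib]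
    rfl
  have hzs' : (m:ℝ)⁻¹ • ∑ i, F i zs' = 0 := by
    refine wlp_ext _ _ ?_ ?_
    · show (m:ℝ)⁻¹ • (∑ i : Fin m, F i zs').ofLp.1 = (0 : Ep)
      rw [hfstsum (xs, ys)]
      exact hstat1
    · show (m:ℝ)⁻¹ • (∑ i : Fin m, F i zs').ofLp.2 = (0 : Eq')
      rw [hsndsum (xs, ys), smul_neg, hstat2, neg_zero]
  -- iterate recursion in the combined space
  have hu0' : ∀ i, u i 0 = zt' := fun i => congrArg ι (hw0 i)
  have hrec' : ∀ i k, u i (k + 1) =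
      u i k - η • (F i (u i k) - F i zt' + (m:ℝ)⁻¹ • ∑ j, F j zt') := by
    intro i k
    refine wlp_ext _ _ ?_ ?_
    · show (w i (k+1)).1 = (w i k).1 -
        η • (gx i (w i k) - gx i zt + (m:ℝ)⁻¹ • (∑ j : Fin m, F j zt').ofLp.1)
      rw [hfstsum zt]
      exact hwx i k
    · show (w i (k+1)).2 = (w i k).2 -
        η • (-(gy i (w i k)) - -(gy i zt) + (m:ℝ)⁻¹ • (∑ j : Fin m, F j zt').ofLp.2)
      rw [hsndsum zt, hwy i k, smul_neg]
      module
  have key := fedgda_key m K hm hK μ L η hμ hμL hη F hmono' hlip' zt' zs' hzs' u hu0' hrec' hgap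
  -- translate the norms back to components
  have lhs_eq : ‖(m:ℝ)⁻¹ • (∑ i, u i K) - zs'‖ ^ 2 =
      ‖(m:ℝ)⁻¹ • ∑ i, (w i K).1 - xs‖ ^ 2 + ‖(m:ℝ)⁻¹ • ∑ i, (w i K).2 - ys‖ ^ 2 := by
    rw [wlp_norm_sq]
    have hc1 : ((m:ℝ)⁻¹ • (∑ i, u i K) - zs').ofLp.1 = (m:ℝ)⁻¹ • ∑ i, (w i K).1 - xs := by
      show (m:ℝ)⁻¹ • (∑ i : Fin m, u i K).ofLp.1 - xs = _
      rw [show (∑ i : Fin m, u i K).ofLp.1 = ∑ i : Fin m, (w i K).1 from by rw [WithLp.ofLp_sum]; exact Prod.fst_sum]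
    have hc2 : ((m:ℝ)⁻¹ • (∑ i, u i K) - zs').ofLp.2 = (m:ℝ)⁻¹ • ∑ i, (w i K).2 - ys := by
      show (m:ℝ)⁻¹ • (∑ i : Fin m, u i K).ofLp.2 - ys = _
      rw [show (∑ i : Fin m, u i K).ofLp.2 = ∑ i : Fin m, (w i K).2 from by rw [WithLp.ofLp_sum]; exact Prod.snd_sum]
    rw [hc1, hc2]
  have rhs_eq : ‖zt' - zs'‖ ^ 2 = ‖zt.1 - xs‖ ^ 2 + ‖zt.2 - ys‖ ^ 2 := by
    rw [wlp_norm_sq]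
    rfl
  rw [← lhs_eq, ← rhs_eq]
  exact key



/-- Linear convergence of FedGDA-GT: under `μ`-strong-convexity-strong-concavity and
`L`-smoothness of the local objectives (expressed via their gradient operators), with `K`
local steps, constant step size `η`, and projections onto the compact convex sets `X`, `Y`,
the iterates satisfy
`‖xᵗ - x*‖² + ‖yᵗ - y*‖² ≤ ρ(η)ᵗ (‖x⁰ - x*‖² + ‖y⁰ - y*‖²)` with
`ρ(η) = 1 - 2(ημK - 2η²L²K² - η⁴L⁴K⁴) ∈ (0,1)`. -/
theorem stmt10 {p q : ℕ} (m K : ℕ) (hm : 0 < m) (hK : 0 < K)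
    (μ L : ℝ) (hμ : 0 < μ) (hμL : μ ≤ L)
    (gx : Fin m → EuclideanSpace ℝ (Fin p) × EuclideanSpace ℝ (Fin q) → EuclideanSpace ℝ (Fin p))
    (gy : Fin m → EuclideanSpace ℝ (Fin p) × EuclideanSpace ℝ (Fin q) → EuclideanSpace ℝ (Fin q))
    -- μ-strong monotonicity of each (∇ₓ fᵢ, -∇_y fᵢ) (from μ-strong convexity-concavity)
    (hmono : ∀ i (z z' : EuclideanSpace ℝ (Fin p) × EuclideanSpace ℝ (Fin q)),
      μ * (‖z.1 - z'.1‖ ^ 2 + ‖z.2 - z'.2‖ ^ 2) ≤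
        (inner ℝ (gx i z - gx i z') (z.1 - z'.1) : ℝ) - (inner ℝ (gy i z - gy i z') (z.2 - z'.2) : ℝ))
    -- L-smoothness of each fᵢ
    (hlip : ∀ i (z z' : EuclideanSpace ℝ (Fin p) × EuclideanSpace ℝ (Fin q)),
      ‖gx i z - gx i z'‖ ^ 2 + ‖gy i z - gy i z'‖ ^ 2 ≤
        L ^ 2 * (‖z.1 - z'.1‖ ^ 2 + ‖z.2 - z'.2‖ ^ 2))
    (X : Set (EuclideanSpace ℝ (Fin p))) (Y : Set (EuclideanSpace ℝ (Fin q)))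
    (hXconv : Convex ℝ X) (hXcomp : IsCompact X)
    (hYconv : Convex ℝ Y) (hYcomp : IsCompact Y)
    (projX : EuclideanSpace ℝ (Fin p) → EuclideanSpace ℝ (Fin p))
    (projY : EuclideanSpace ℝ (Fin q) → EuclideanSpace ℝ (Fin q))
    (hprojX : ∀ w, projX w ∈ X ∧ ∀ u ∈ X, ‖projX w - w‖ ≤ ‖u - w‖)
    (hprojY : ∀ w, projY w ∈ Y ∧ ∀ u ∈ Y, ‖projY w - w‖ ≤ ‖u - w‖)
    -- the minimax point of the average objective, lying in X × Y
    (xs : EuclideanSpace ℝ (Fin p)) (ys : EuclideanSpace ℝ (Fin q))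
    (hxsX : xs ∈ X) (hysY : ys ∈ Y)
    (hstat1 : (m : ℝ)⁻¹ • ∑ i, gx i (xs, ys) = 0)
    (hstat2 : (m : ℝ)⁻¹ • ∑ i, gy i (xs, ys) = 0)
    (η : ℝ) (hη : 0 < η)
    (hρ : 1 - 2 * (η * μ * K - 2 * η ^ 2 * L ^ 2 * (K : ℝ) ^ 2 - η ^ 4 * L ^ 4 * (K : ℝ) ^ 4)
      ∈ Set.Ioo (0 : ℝ) 1)
    -- the FedGDA-GT iterates
    (z : ℕ → EuclideanSpace ℝ (Fin p) × EuclideanSpace ℝ (Fin q))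
    (hz0 : (z 0).1 ∈ X ∧ (z 0).2 ∈ Y)
    (w : ℕ → Fin m → ℕ → EuclideanSpace ℝ (Fin p) × EuclideanSpace ℝ (Fin q))
    (hw0 : ∀ t i, w t i 0 = z t)
    (hwx : ∀ t i k, (w t i (k + 1)).1 = (w t i k).1 -
        η • (gx i (w t i k) - gx i (z t) + (m : ℝ)⁻¹ • ∑ j, gx j (z t)))
    (hwy : ∀ t i k, (w t i (k + 1)).2 = (w t i k).2 +
        η • (gy i (w t i k) - gy i (z t) + (m : ℝ)⁻¹ • ∑ j, gy j (z t)))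
    (hzrec : ∀ t, z (t + 1) =
      (projX ((m : ℝ)⁻¹ • ∑ i, (w t i K).1), projY ((m : ℝ)⁻¹ • ∑ i, (w t i K).2))) :
    ∀ t, ‖(z t).1 - xs‖ ^ 2 + ‖(z t).2 - ys‖ ^ 2 ≤
      (1 - 2 * (η * μ * K - 2 * η ^ 2 * L ^ 2 * (K : ℝ) ^ 2 - η ^ 4 * L ^ 4 * (K : ℝ) ^ 4)) ^ t *
        (‖(z 0).1 - xs‖ ^ 2 + ‖(z 0).2 - ys‖ ^ 2) := by
  have hgap : 0 < η * μ * K - 2 * η ^ 2 * L ^ 2 * (K:ℝ) ^ 2 - η ^ 4 * L ^ 4 * (K:ℝ) ^ 4 := by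
    rcases hρ with ⟨h0, h1⟩
    linarith
  intro t
  induction t with
  | zero => simp
  | succ t ih =>
    have one := fedgda_onestep m K hm hK μ L η hμ hμL hη gx gy hmono hlip xs ys hstat1 hstat2
      (z t) (w t) (hw0 t) (hwx t) (hwy t) hgap
    have p1 := proj_contract hXconv hprojX hxsX ((m:ℝ)⁻¹ • ∑ i, (w t i K).1)
    have p2 := proj_contract hYconv hprojY hysY ((m:ℝ)⁻¹ • ∑ i, (w t i K).2)
    have hz1 : (z (t+1)).1 = projX ((m:ℝ)⁻¹ • ∑ i, (w t i K).1) := by rw [hzrec t]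
    have hz2 : (z (t+1)).2 = projY ((m:ℝ)⁻¹ • ∑ i, (w t i K).2) := by rw [hzrec t]
    have step : ‖(z (t+1)).1 - xs‖ ^ 2 + ‖(z (t+1)).2 - ys‖ ^ 2 ≤
        (1 - 2 * (η * μ * K - 2 * η ^ 2 * L ^ 2 * (K : ℝ) ^ 2 - η ^ 4 * L ^ 4 * (K : ℝ) ^ 4)) *
          (‖(z t).1 - xs‖ ^ 2 + ‖(z t).2 - ys‖ ^ 2) := by
      rw [hz1, hz2]
      linarith [one, p1, p2]
    calc ‖(z (t+1)).1 - xs‖ ^ 2 + ‖(z (t+1)).2 - ys‖ ^ 2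
        ≤ (1 - 2 * (η * μ * K - 2 * η ^ 2 * L ^ 2 * (K : ℝ) ^ 2 - η ^ 4 * L ^ 4 * (K : ℝ) ^ 4)) *
          (‖(z t).1 - xs‖ ^ 2 + ‖(z t).2 - ys‖ ^ 2) := step
      _ ≤ (1 - 2 * (η * μ * K - 2 * η ^ 2 * L ^ 2 * (K : ℝ) ^ 2 - η ^ 4 * L ^ 4 * (K : ℝ) ^ 4)) *
          ((1 - 2 * (η * μ * K - 2 * η ^ 2 * L ^ 2 * (K : ℝ) ^ 2 - η ^ 4 * L ^ 4 * (K : ℝ) ^ 4)) ^ t *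
            (‖(z 0).1 - xs‖ ^ 2 + ‖(z 0).2 - ys‖ ^ 2)) :=
          mul_le_mul_of_nonneg_left ih hρ.1.le
      _ = _ := by ring
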